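/- Let (X,d) be a metric space endowed with a Borel measure μ, let m > 0, λ ∈ [0,m), 1 ≤ p ≤ q < ∞ and C_V, C₁, C₂ > 0. Assume μ(B(x,R)) ≤ C_V · R^m for all x ∈ X and R > 0, and let G : (0,∞) × X × X → ℝ be measurable with 0 ≤ G(t,x,y) ≤ C₁ · t^{−m/2} · exp(−C₂ · d(x,y)²/t) for all t > 0 and x, y, and with ∫_X G(t,x,y) dμ(y) ≤ 1 for all t > 0 and x. Let u₀ : X → ℝ be measurable and N ≥ 0 with ∫_{B(x,R)} |u₀|^p dμ ≤ N^p R^λ for all x, R. Then there exists C > 0, depending only on m, p, q, λ, C_V, C₁ and C₂, such that for all t > 0, x₀ ∈ X and R > 0: ∫_{B(x₀,R)} ( ∫_X G(t,x,y) |u₀(y)| dμ(y) )^q dμ(x) ≤ ( C · t^{−((m−λ)/2)·(1/p − 1/q)} · N )^q · R^λ. -/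

import Mathlib

open MeasureTheory
open scoped ENNReal NNReal

lemma morrey_aux_summable (ρ c : ℝ) (hρ : 0 ≤ ρ) (hc : 0 < c) :
    Summable fun k : ℕ => ((k : ℝ) + 1) ^ ρ * Real.exp (-c) ^ k := by
  set r := Real.exp (-c) with hr
  have hr0 : 0 < r := Real.exp_pos _
  have hr1 : r < 1 := Real.exp_lt_one_iff.mpr (by linarith)
  obtain ⟨n, hρn⟩ : ∃ n : ℕ, ρ ≤ (n : ℝ) := ⟨⌈ρ⌉₊, Nat.le_ceil ρ⟩
  have base : Summable fun k : ℕ => (k : ℝ) ^ n * r ^ k :=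
    summable_pow_mul_geometric_of_norm_lt_one n (by rwa [Real.norm_eq_abs, abs_of_pos hr0])
  have shift : Summable fun k : ℕ => ((k + 1 : ℕ) : ℝ) ^ n * r ^ (k + 1) :=
    (summable_nat_add_iff 1).mpr base
  have main : Summable fun k : ℕ => ((k : ℝ) + 1) ^ n * r ^ k := by
    have hsum := shift.mul_left r⁻¹
    refine hsum.congr fun k => ?_
    have hcast : ((k + 1 : ℕ) : ℝ) = (k : ℝ) + 1 := by push_cast; ring
    rw [hcast, pow_succ]
    rw [show r⁻¹ * (((k : ℝ) + 1) ^ n * (r ^ k * r)) = ((k : ℝ) + 1) ^ n * r ^ k * (r⁻¹ * r) by ring]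
    rw [inv_mul_cancel₀ hr0.ne', mul_one]
  refine Summable.of_nonneg_of_le (fun k => by positivity) (fun k => ?_) main
  have h1 : (1 : ℝ) ≤ (k : ℝ) + 1 := by linarith [Nat.cast_nonneg (α := ℝ) k]
  have : ((k : ℝ) + 1) ^ ρ ≤ ((k : ℝ) + 1) ^ (n : ℝ) :=
    Real.rpow_le_rpow_of_exponent_le h1 hρn
  rw [Real.rpow_natCast] at this
  exact mul_le_mul_of_nonneg_right this (by positivity)

noncomputable def morreyK (ρ c : ℝ) : ℝ := ∑' k : ℕ, ((k : ℝ) + 1) ^ ρ * Real.exp (-c) ^ k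

lemma morreyK_nonneg (ρ c : ℝ) : 0 ≤ morreyK ρ c :=
  tsum_nonneg fun k => by positivity

lemma rpow_exp_bound (θ a : ℝ) (hθ : 0 ≤ θ) (ha : 0 < a) :
    ∃ M : ℝ, 1 ≤ M ∧ ∀ s : ℝ, 0 < s → s ^ θ * Real.exp (-(a * s)) ≤ M := by
  obtain ⟨n, hθn⟩ : ∃ n : ℕ, θ ≤ (n : ℝ) := ⟨⌈θ⌉₊, Nat.le_ceil θ⟩
  refine ⟨max 1 ((n.factorial : ℝ) / a ^ n), le_max_left _ _, fun s hs => ?_⟩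
  by_cases hs1 : s ≤ 1
  · have h1 : s ^ θ ≤ 1 := Real.rpow_le_one hs.le hs1 hθ
    have h2 : Real.exp (-(a * s)) ≤ 1 := Real.exp_le_one_iff.mpr (by nlinarith)
    calc s ^ θ * Real.exp (-(a * s)) ≤ 1 * 1 :=
          mul_le_mul h1 h2 (Real.exp_pos _).le zero_le_one
      _ ≤ _ := by simpa using le_max_left 1 _
  · push_neg at hs1
    have h1 : s ^ θ ≤ s ^ (n : ℝ) :=
      Real.rpow_le_rpow_of_exponent_le hs1.le hθn
    rw [Real.rpow_natCast] at h1
    have h2 : (a * s) ^ n / n.factorial ≤ Real.exp (a * s) :=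
      Real.pow_div_factorial_le_exp (x := a * s) (le_of_lt (mul_pos ha hs)) n
    have h3 : s ^ n ≤ (n.factorial : ℝ) / a ^ n * Real.exp (a * s) := by
      rw [mul_pow] at h2
      have hfac : (0 : ℝ) < n.factorial := by positivity
      have han : (0 : ℝ) < a ^ n := by positivity
      rw [div_le_iff₀ hfac] at h2
      rw [div_mul_eq_mul_div, le_div_iff₀ han]
      nlinarith [Real.exp_pos (a * s)]
    have hexp : Real.exp (-(a * s)) = (Real.exp (a * s))⁻¹ := by
      rw [Real.exp_neg]
    calc s ^ θ * Real.exp (-(a * s)) ≤ s ^ n * Real.exp (-(a * s)) :=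
          mul_le_mul_of_nonneg_right h1 (Real.exp_pos _).le
      _ ≤ ((n.factorial : ℝ) / a ^ n * Real.exp (a * s)) * Real.exp (-(a * s)) :=
          mul_le_mul_of_nonneg_right h3 (Real.exp_pos _).le
      _ = (n.factorial : ℝ) / a ^ n := by
          rw [mul_assoc, ← Real.exp_add]
          simp
      _ ≤ _ := le_max_right _ _

lemma jensen_sub {X : Type*} [MeasurableSpace X] (ν : Measure X) (hν : ν Set.univ ≤ 1)
    (p : ℝ) (hp : 1 ≤ p) (f : X → ℝ≥0∞) (hf : AEMeasurable f ν) :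
    (∫⁻ y, f y ∂ν) ^ p ≤ ∫⁻ y, f y ^ p ∂ν := by
  rcases eq_or_lt_of_le hp with h1 | h1
  · simp [← h1]
  · have hpq : p.HolderConjugate (Real.conjExponent p) := Real.HolderConjugate.conjExponent h1
    have hp0 : (0 : ℝ) < p := lt_trans zero_lt_one h1
    have key := ENNReal.lintegral_mul_le_Lp_mul_Lq ν hpq hf aemeasurable_const (g := fun _ => 1)
    simp only [mul_one, Pi.mul_apply, ENNReal.one_rpow, lintegral_const, one_mul] at key
    have h2 : ν Set.univ ^ (1 / Real.conjExponent p) ≤ 1 := by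
      calc ν Set.univ ^ (1 / Real.conjExponent p) ≤ (1 : ℝ≥0∞) ^ (1 / Real.conjExponent p) :=
            ENNReal.rpow_le_rpow hν (one_div_nonneg.mpr hpq.symm.pos.le)
        _ = 1 := ENNReal.one_rpow _
    have h3 : ∫⁻ y, f y ∂ν ≤ (∫⁻ y, f y ^ p ∂ν) ^ (1 / p) := by
      calc ∫⁻ y, f y ∂ν ≤ (∫⁻ y, f y ^ p ∂ν) ^ (1 / p) * ν Set.univ ^ (1 / Real.conjExponent p) :=
            key
        _ ≤ (∫⁻ y, f y ^ p ∂ν) ^ (1 / p) * 1 := mul_le_mul_right h2 _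
        _ = _ := mul_one _
    calc (∫⁻ y, f y ∂ν) ^ p ≤ ((∫⁻ y, f y ^ p ∂ν) ^ (1 / p)) ^ p :=
          ENNReal.rpow_le_rpow h3 hp0.le
      _ = ∫⁻ y, f y ^ p ∂ν := by
          rw [← ENNReal.rpow_mul, one_div, inv_mul_cancel₀ hp0.ne', ENNReal.rpow_one]

lemma gauss_morrey {X : Type*} [MetricSpace X] [MeasurableSpace X] [BorelSpace X]
    (μ : Measure X) (ρ c A : ℝ) (hρ : 0 ≤ ρ) (hc : 0 < c) (hA : 0 ≤ A)
    (h : X → ℝ≥0∞) (hh : Measurable h)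
    (hmor : ∀ (z : X) (r : ℝ), 0 < r →
      ∫⁻ y in Metric.ball z r, h y ∂μ ≤ ENNReal.ofReal (A * r ^ ρ))
    (t : ℝ) (ht : 0 < t) (z : X) :
    ∫⁻ y, ENNReal.ofReal (Real.exp (-c * dist z y ^ 2 / t)) * h y ∂μ ≤
      ENNReal.ofReal (morreyK ρ c * (A * t ^ (ρ / 2))) := by
  have hσ : 0 < Real.sqrt t := Real.sqrt_pos.mpr ht
  set σ := Real.sqrt t with hσdef
  set S : ℕ → Set X := fun k => Metric.ball z (((k : ℝ) + 1) * σ) \ Metric.ball z ((k : ℝ) * σ)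
    with hS
  have hcover : (⋃ k, S k) = Set.univ := by
    refine Set.eq_univ_of_forall fun y => Set.mem_iUnion.mpr ?_
    refine ⟨⌊dist z y / σ⌋₊, ?_, ?_⟩
    · rw [Metric.mem_ball, dist_comm]
      have h1 : dist z y / σ < (⌊dist z y / σ⌋₊ : ℝ) + 1 := Nat.lt_floor_add_one _
      calc dist z y = dist z y / σ * σ := by field_simp
        _ < ((⌊dist z y / σ⌋₊ : ℝ) + 1) * σ := by
            exact mul_lt_mul_of_pos_right h1 hσ
    · intro hmem
      rw [Metric.mem_ball, dist_comm] at hmem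
      have h2 : (⌊dist z y / σ⌋₊ : ℝ) ≤ dist z y / σ :=
        Nat.floor_le (by positivity)
      have : (⌊dist z y / σ⌋₊ : ℝ) * σ ≤ dist z y := by
        calc (⌊dist z y / σ⌋₊ : ℝ) * σ ≤ dist z y / σ * σ :=
              mul_le_mul_of_nonneg_right h2 hσ.le
          _ = dist z y := by field_simp
      linarith
  have hterm : ∀ k : ℕ, ∫⁻ y in S k, ENNReal.ofReal (Real.exp (-c * dist z y ^ 2 / t)) * h y ∂μ ≤
      ENNReal.ofReal (((k : ℝ) + 1) ^ ρ * Real.exp (-c) ^ k * (A * t ^ (ρ / 2))) := by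
    intro k
    have hstep1 : ∫⁻ y in S k, ENNReal.ofReal (Real.exp (-c * dist z y ^ 2 / t)) * h y ∂μ ≤
        ∫⁻ y in S k, ENNReal.ofReal (Real.exp (-c) ^ k) * h y ∂μ := by
      refine setLIntegral_mono (measurable_const.mul hh) fun y hy => ?_
      refine mul_le_mul_left (ENNReal.ofReal_le_ofReal ?_) _
      rw [← Real.exp_nat_mul]
      refine Real.exp_le_exp.mpr ?_
      have hd : (k : ℝ) * σ ≤ dist z y := by
        have := hy.2
        rw [Metric.mem_ball, dist_comm] at this
        exact not_lt.mp this
      have hd2 : ((k : ℝ) * σ) ^ 2 ≤ dist z y ^ 2 := by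
        refine pow_le_pow_left₀ (by positivity) hd 2
      have hσ2 : σ ^ 2 = t := Real.sq_sqrt ht.le
      rw [mul_pow, hσ2] at hd2
      have hk : (k : ℝ) ≤ (k : ℝ) ^ 2 := by
        have := Nat.le_self_pow (two_ne_zero) k
        exact_mod_cast Nat.cast_le.mpr this
      rw [div_le_iff₀ ht]
      nlinarith [mul_nonneg hc.le (sub_nonneg.mpr hd2),
        mul_nonneg (mul_nonneg hc.le ht.le) (sub_nonneg.mpr hk)]
    have hstep2 : ∫⁻ y in S k, ENNReal.ofReal (Real.exp (-c) ^ k) * h y ∂μ =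
        ENNReal.ofReal (Real.exp (-c) ^ k) * ∫⁻ y in S k, h y ∂μ :=
      lintegral_const_mul' _ _ ENNReal.ofReal_ne_top
    have hstep3 : ∫⁻ y in S k, h y ∂μ ≤ ENNReal.ofReal (A * (((k : ℝ) + 1) * σ) ^ ρ) := by
      refine le_trans (lintegral_mono_set Set.diff_subset) ?_
      exact hmor z _ (by positivity)
    calc ∫⁻ y in S k, ENNReal.ofReal (Real.exp (-c * dist z y ^ 2 / t)) * h y ∂μ
        ≤ ENNReal.ofReal (Real.exp (-c) ^ k) * ∫⁻ y in S k, h y ∂μ := by rw [← hstep2]; exact hstep1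
      _ ≤ ENNReal.ofReal (Real.exp (-c) ^ k) * ENNReal.ofReal (A * (((k : ℝ) + 1) * σ) ^ ρ) :=
          mul_le_mul_right hstep3 _
      _ = ENNReal.ofReal (((k : ℝ) + 1) ^ ρ * Real.exp (-c) ^ k * (A * t ^ (ρ / 2))) := by
          rw [← ENNReal.ofReal_mul (by positivity)]
          congr 1
          have hσρ : σ ^ ρ = t ^ (ρ / 2) := by
            rw [hσdef, Real.sqrt_eq_rpow, ← Real.rpow_mul ht.le]
            congr 1
            ring
          rw [Real.mul_rpow (by positivity) hσ.le, hσρ]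
          ring
  calc ∫⁻ y, ENNReal.ofReal (Real.exp (-c * dist z y ^ 2 / t)) * h y ∂μ
      = ∫⁻ y in ⋃ k, S k, ENNReal.ofReal (Real.exp (-c * dist z y ^ 2 / t)) * h y ∂μ := by
        rw [hcover, Measure.restrict_univ]
    _ ≤ ∑' k, ∫⁻ y in S k, ENNReal.ofReal (Real.exp (-c * dist z y ^ 2 / t)) * h y ∂μ :=
        lintegral_iUnion_le _ _
    _ ≤ ∑' k : ℕ, ENNReal.ofReal (((k : ℝ) + 1) ^ ρ * Real.exp (-c) ^ k * (A * t ^ (ρ / 2))) :=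
        ENNReal.tsum_le_tsum hterm
    _ = ENNReal.ofReal (∑' k : ℕ, ((k : ℝ) + 1) ^ ρ * Real.exp (-c) ^ k * (A * t ^ (ρ / 2))) := by
        rw [ENNReal.ofReal_tsum_of_nonneg (fun k => by positivity)
          ((morrey_aux_summable ρ c hρ hc).mul_right _)]
    _ = ENNReal.ofReal (morreyK ρ c * (A * t ^ (ρ / 2))) := by
        rw [tsum_mul_right]
        rfl

lemma far_real_aux {R t m lam C₂ M : ℝ} (hR : 0 < R) (ht : 0 < t) (hlam0 : 0 ≤ lam)
    (hMs : ∀ s : ℝ, 0 < s → s ^ ((m - lam) / 2) * Real.exp (-(C₂ / 2 * s)) ≤ M) :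
    t ^ (-(m / 2)) * t ^ (lam / 2) * R ^ m * Real.exp (-(C₂ / 2 * (R ^ 2 / t))) ≤ M * R ^ lam := by
  have hs : 0 < R ^ 2 / t := by positivity
  have key := hMs _ hs
  have h2 : (R ^ 2 / t) ^ ((m - lam) / 2) = R ^ (m - lam) * t ^ ((lam - m) / 2) := by
    rw [Real.div_rpow (by positivity) ht.le]
    rw [← Real.rpow_natCast R 2, ← Real.rpow_mul hR.le]
    rw [div_eq_mul_inv, ← Real.rpow_neg ht.le]
    norm_num
    ring_nf
  rw [h2] at key
  have h1 : t ^ (-(m / 2)) * t ^ (lam / 2) = t ^ ((lam - m) / 2) := by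
    rw [← Real.rpow_add ht]; ring_nf
  rw [h1]
  have hmul := mul_le_mul_of_nonneg_right key (le_of_lt (Real.rpow_pos_of_pos hR lam))
  have h3 : R ^ (m - lam) * R ^ lam = R ^ m := by
    rw [← Real.rpow_add hR]; ring_nf
  calc t ^ ((lam - m) / 2) * R ^ m * Real.exp (-(C₂ / 2 * (R ^ 2 / t)))
      = R ^ (m - lam) * t ^ ((lam - m) / 2) * Real.exp (-(C₂ / 2 * (R ^ 2 / t))) * R ^ lam := by
        rw [← h3]; ring
    _ ≤ M * R ^ lam := hmul

lemma final_real (CA CB N p q lam m t : ℝ) (hCA : 1 ≤ CA) (hCB : 1 ≤ CB) (hN : 0 ≤ N)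
    (hp : 1 ≤ p) (hpq : p ≤ q) (ht : 0 < t) :
    (CA * N ^ p * t ^ ((lam - m) / 2)) ^ ((q - p) / p) * (CB * (N ^ p)) ≤
      (CA ^ (1 / p) * CB * t ^ (-((m - lam) / 2) * (1 / p - 1 / q)) * N) ^ q := by
  have hp0 : (0 : ℝ) < p := lt_of_lt_of_le one_pos hp
  have hq0 : (0 : ℝ) < q := lt_of_lt_of_le one_pos (le_trans hp hpq)
  have hCA0 : (0 : ℝ) < CA := lt_of_lt_of_le one_pos hCA
  have hCB0 : (0 : ℝ) < CB := lt_of_lt_of_le one_pos hCB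
  have hs0 : 0 ≤ (q - p) / p := div_nonneg (by linarith) hp0.le
  set s := (q - p) / p with hsdef
  -- expand LHS
  have hNp : (0 : ℝ) ≤ N ^ p := Real.rpow_nonneg hN p
  have hte : (0 : ℝ) ≤ t ^ ((lam - m) / 2) := (Real.rpow_pos_of_pos ht _).le
  have hLHS : (CA * N ^ p * t ^ ((lam - m) / 2)) ^ s * (CB * (N ^ p)) =
      (CA ^ s * CB) * (N ^ (p * s) * N ^ p) * t ^ ((lam - m) / 2 * s) := by
    rw [Real.mul_rpow (by positivity) hte, Real.mul_rpow hCA0.le hNp,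
      ← Real.rpow_mul ht.le, ← Real.rpow_mul hN]
    ring
  have hRHS : (CA ^ (1 / p) * CB * t ^ (-((m - lam) / 2) * (1 / p - 1 / q)) * N) ^ q =
      (CA ^ (q / p) * CB ^ q) * N ^ q * t ^ ((lam - m) / 2 * s) := by
    rw [Real.mul_rpow (by positivity) hN, Real.mul_rpow (by positivity)
      (Real.rpow_pos_of_pos ht _).le, Real.mul_rpow (Real.rpow_pos_of_pos hCA0 _).le hCB0.le,
      ← Real.rpow_mul hCA0.le, ← Real.rpow_mul ht.le]
    have e1 : 1 / p * q = q / p := by ring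
    have e2 : -((m - lam) / 2) * (1 / p - 1 / q) * q = (lam - m) / 2 * s := by
      rw [hsdef]; field_simp; ring
    rw [e1, e2]
    ring
  rw [hLHS, hRHS]
  rcases eq_or_lt_of_le hN with hN0 | hN0
  · have : N ^ p = 0 := by rw [← hN0, Real.zero_rpow hp0.ne']
    rw [this, mul_zero, mul_zero, zero_mul]
    positivity
  · have hNq : N ^ (p * s) * N ^ p = N ^ q := by
      rw [← Real.rpow_add hN0]
      congr 1
      rw [hsdef]; field_simp; ring
    rw [hNq]
    have hc1 : CA ^ s ≤ CA ^ (q / p) :=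
      Real.rpow_le_rpow_of_exponent_le hCA (by rw [hsdef]; gcongr; linarith)
    have hc2 : CB ≤ CB ^ q := by
      nth_rewrite 1 [← Real.rpow_one CB]
      exact Real.rpow_le_rpow_of_exponent_le hCB (by linarith)
    have : CA ^ s * CB ≤ CA ^ (q / p) * CB ^ q := by
      exact mul_le_mul hc1 hc2 hCB0.le (Real.rpow_nonneg hCA0.le _)
    have key := mul_le_mul_of_nonneg_right
      (mul_le_mul_of_nonneg_right this (by positivity : (0 : ℝ) ≤ N ^ q))
      (by positivity : (0 : ℝ) ≤ t ^ ((lam - m) / 2 * s))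
    exact key

/-- Abstract form of the dispersive estimate `M_{p,λ} → M_{q,λ}` for the heat
semigroup on Ricci-flat manifolds (Theorem 7.2): a Markovian kernel with the
global Gaussian bound `C₁ t^{-m/2} e^{-C₂ d(x,y)²/t}` under the Euclidean
volume upper bound `μ(B(x,R)) ≤ C_V R^m`. -/
theorem dispersive_Morrey_ricci_flat
    {X : Type*} [MetricSpace X] [MeasurableSpace X] [BorelSpace X]
    (μ : Measure X) (m lam p q C_V C₁ C₂ N : ℝ)
    (hm : 0 < m) (hlam0 : 0 ≤ lam) (hlamm : lam < m)
    (hp : 1 ≤ p) (hpq : p ≤ q)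
    (hCV : 0 < C_V) (hC₁ : 0 < C₁) (hC₂ : 0 < C₂)
    (hvol : ∀ (x : X) (R : ℝ), 0 < R → μ (Metric.ball x R) ≤ ENNReal.ofReal (C_V * R ^ m))
    (G : ℝ → X → X → ℝ)
    (hGmeas : Measurable fun w : ℝ × X × X => G w.1 w.2.1 w.2.2)
    (hG0 : ∀ t > (0 : ℝ), ∀ x y : X, 0 ≤ G t x y)
    (hGbd : ∀ t > (0 : ℝ), ∀ x y : X, G t x y ≤
      C₁ * t ^ (-(m / 2)) * Real.exp (-C₂ * dist x y ^ 2 / t))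
    (hGmarkov : ∀ t > (0 : ℝ), ∀ x : X, ∫⁻ y, ENNReal.ofReal (G t x y) ∂μ ≤ 1)
    (u₀ : X → ℝ) (hu₀ : Measurable u₀) (hN : 0 ≤ N)
    (hmor : ∀ (x : X) (R : ℝ), 0 < R →
      ∫⁻ y in Metric.ball x R, ENNReal.ofReal (|u₀ y| ^ p) ∂μ ≤
        ENNReal.ofReal (N ^ p * R ^ lam)) :
    ∃ C > (0 : ℝ), ∀ t > (0 : ℝ), ∀ (x₀ : X) (R : ℝ), 0 < R →
      ∫⁻ x in Metric.ball x₀ R, (∫⁻ y, ENNReal.ofReal (G t x y * |u₀ y|) ∂μ) ^ q ∂μ ≤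
        ENNReal.ofReal ((C * t ^ (-((m - lam) / 2) * (1 / p - 1 / q)) * N) ^ q * R ^ lam) := by
  have hp0 : (0 : ℝ) < p := lt_of_lt_of_le one_pos hp
  have hq0 : (0 : ℝ) < q := lt_of_lt_of_le one_pos (hp.trans hpq)
  obtain ⟨M, hM1, hMs⟩ := rpow_exp_bound ((m - lam) / 2) (C₂ / 2) (by linarith) (by linarith)
  have hKl0 := morreyK_nonneg lam C₂
  have hKm0 := morreyK_nonneg m C₂
  have hK20 := morreyK_nonneg lam (C₂ / 2)
  set Kl := morreyK lam C₂ with hKldef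
  set Km := morreyK m C₂ with hKmdef
  set K2 := morreyK lam (C₂ / 2) with hK2def
  set CA := max (C₁ * Kl) 1 with hCAdef
  set CB := max (C₁ * Km * C_V * 2 ^ lam + C_V * (C₁ * K2 * M)) 1 with hCBdef
  have hCA1 : 1 ≤ CA := le_max_right _ _
  have hCB1 : 1 ≤ CB := le_max_right _ _
  have hCA0 : (0 : ℝ) < CA := lt_of_lt_of_le one_pos hCA1
  have hCB0 : (0 : ℝ) < CB := lt_of_lt_of_le one_pos hCB1
  refine ⟨CA ^ (1 / p) * CB, mul_pos (Real.rpow_pos_of_pos hCA0 _) hCB0, ?_⟩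
  intro t ht x₀ R hR
  have htp : ∀ e : ℝ, (0 : ℝ) < t ^ e := fun e => Real.rpow_pos_of_pos ht e
  set h : X → ℝ≥0∞ := fun y => ENNReal.ofReal (|u₀ y| ^ p) with hhdef
  have hhmeas : Measurable h :=
    ((Real.continuous_rpow_const hp0.le).measurable.comp hu₀.abs).ennreal_ofReal
  have hGmx : ∀ x : X, Measurable fun y => ENNReal.ofReal (G t x y) := fun x =>
    (hGmeas.comp (measurable_const.prodMk (measurable_const.prodMk measurable_id))).ennreal_ofReal
  have hGmxy : Measurable fun pa : X × X => ENNReal.ofReal (G t pa.1 pa.2) :=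
    (hGmeas.comp (measurable_const.prodMk measurable_id)).ennreal_ofReal
  -- Jensen pointwise
  have hJen : ∀ x : X, (∫⁻ y, ENNReal.ofReal (G t x y * |u₀ y|) ∂μ) ^ p ≤
      ∫⁻ y, ENNReal.ofReal (G t x y) * h y ∂μ := by
    intro x
    have habs : Measurable fun y => ENNReal.ofReal |u₀ y| := hu₀.abs.ennreal_ofReal
    set ν := μ.withDensity fun y => ENNReal.ofReal (G t x y) with hνdef
    have hν1 : ν Set.univ ≤ 1 := by
      rw [hνdef, withDensity_apply _ MeasurableSet.univ, Measure.restrict_univ]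
      exact hGmarkov t ht x
    have e1 : ∫⁻ y, ENNReal.ofReal (G t x y * |u₀ y|) ∂μ = ∫⁻ y, ENNReal.ofReal |u₀ y| ∂ν := by
      rw [hνdef, lintegral_withDensity_eq_lintegral_mul μ (hGmx x) habs]
      refine lintegral_congr fun y => ?_
      simp only [Pi.mul_apply]
      exact ENNReal.ofReal_mul (hG0 t ht x y)
    have e2 : ∫⁻ y, (ENNReal.ofReal |u₀ y|) ^ p ∂ν = ∫⁻ y, ENNReal.ofReal (G t x y) * h y ∂μ := by
      have hg : Measurable fun y => (ENNReal.ofReal |u₀ y|) ^ p :=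
        ENNReal.continuous_rpow_const.measurable.comp habs
      rw [hνdef, lintegral_withDensity_eq_lintegral_mul μ (hGmx x) hg]
      refine lintegral_congr fun y => ?_
      simp only [Pi.mul_apply, Function.comp]
      rw [ENNReal.ofReal_rpow_of_nonneg (abs_nonneg _) hp0.le]
    calc (∫⁻ y, ENNReal.ofReal (G t x y * |u₀ y|) ∂μ) ^ p
        = (∫⁻ y, ENNReal.ofReal |u₀ y| ∂ν) ^ p := by rw [e1]
      _ ≤ ∫⁻ y, (ENNReal.ofReal |u₀ y|) ^ p ∂ν := jensen_sub ν hν1 p hp _ habs.aemeasurable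
      _ = _ := e2
  -- L∞ bound
  have hPle : ∀ x : X, ∫⁻ y, ENNReal.ofReal (G t x y) * h y ∂μ ≤
      ENNReal.ofReal (CA * N ^ p * t ^ ((lam - m) / 2)) := by
    intro x
    have step2 := gauss_morrey μ lam C₂ (N ^ p) hlam0 hC₂ (Real.rpow_nonneg hN p) h hhmeas
      hmor t ht x
    calc ∫⁻ y, ENNReal.ofReal (G t x y) * h y ∂μ
        ≤ ∫⁻ y, ENNReal.ofReal (C₁ * t ^ (-(m / 2))) *
            (ENNReal.ofReal (Real.exp (-C₂ * dist x y ^ 2 / t)) * h y) ∂μ := by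
          refine lintegral_mono fun y => ?_
          rw [← mul_assoc, ← ENNReal.ofReal_mul (mul_pos hC₁ (htp _)).le]
          exact mul_le_mul_left (ENNReal.ofReal_le_ofReal (hGbd t ht x y)) _
      _ = ENNReal.ofReal (C₁ * t ^ (-(m / 2))) *
            ∫⁻ y, ENNReal.ofReal (Real.exp (-C₂ * dist x y ^ 2 / t)) * h y ∂μ :=
          lintegral_const_mul' _ _ ENNReal.ofReal_ne_top
      _ ≤ ENNReal.ofReal (C₁ * t ^ (-(m / 2))) * ENNReal.ofReal (Kl * (N ^ p * t ^ (lam / 2))) :=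
          mul_le_mul_right step2 _
      _ = ENNReal.ofReal (C₁ * t ^ (-(m / 2)) * (Kl * (N ^ p * t ^ (lam / 2)))) :=
          (ENNReal.ofReal_mul (mul_pos hC₁ (htp _)).le).symm
      _ ≤ ENNReal.ofReal (CA * N ^ p * t ^ ((lam - m) / 2)) := by
          refine ENNReal.ofReal_le_ofReal ?_
          have ha : t ^ (-(m / 2)) * t ^ (lam / 2) = t ^ ((lam - m) / 2) := by
            rw [← Real.rpow_add ht]; ring_nf
          calc C₁ * t ^ (-(m / 2)) * (Kl * (N ^ p * t ^ (lam / 2)))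
              = C₁ * Kl * N ^ p * (t ^ (-(m / 2)) * t ^ (lam / 2)) := by ring
            _ = C₁ * Kl * N ^ p * t ^ ((lam - m) / 2) := by rw [ha]
            _ ≤ CA * N ^ p * t ^ ((lam - m) / 2) := by
                refine mul_le_mul_of_nonneg_right (mul_le_mul_of_nonneg_right
                  (le_max_left _ _) (Real.rpow_nonneg hN p)) (Real.rpow_pos_of_pos ht _).le
  set B₁ := Metric.ball x₀ R with hB₁def
  set B₂ := Metric.ball x₀ (2 * R) with hB₂def
  haveI hfin1 : IsFiniteMeasure (μ.restrict B₁) := ⟨by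
    rw [Measure.restrict_apply_univ]
    exact lt_of_le_of_lt (hvol x₀ R hR) ENNReal.ofReal_lt_top⟩
  haveI hfin2 : IsFiniteMeasure (μ.restrict B₂) := ⟨by
    rw [Measure.restrict_apply_univ]
    exact lt_of_le_of_lt (hvol x₀ (2 * R) (by linarith)) ENNReal.ofReal_lt_top⟩
  -- x-integral bound for the near part
  have hxint : ∀ y : X, ∫⁻ x in B₁, ENNReal.ofReal (G t x y) ∂μ ≤
      ENNReal.ofReal (C₁ * Km * C_V) := by
    intro y
    have hone := gauss_morrey μ m C₂ C_V hm.le hC₂ hCV.le (fun _ => (1 : ℝ≥0∞))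
      measurable_const (fun z r hr => by simpa using hvol z r hr) t ht y
    calc ∫⁻ x in B₁, ENNReal.ofReal (G t x y) ∂μ
        ≤ ∫⁻ x, ENNReal.ofReal (G t x y) ∂μ := setLIntegral_le_lintegral _ _
      _ ≤ ∫⁻ x, ENNReal.ofReal (C₁ * t ^ (-(m / 2))) *
            (ENNReal.ofReal (Real.exp (-C₂ * dist y x ^ 2 / t)) * 1) ∂μ := by
          refine lintegral_mono fun x => ?_
          rw [mul_one, ← ENNReal.ofReal_mul (mul_pos hC₁ (htp _)).le]
          refine ENNReal.ofReal_le_ofReal ?_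
          rw [dist_comm y x]
          exact hGbd t ht x y
      _ = ENNReal.ofReal (C₁ * t ^ (-(m / 2))) *
            ∫⁻ x, ENNReal.ofReal (Real.exp (-C₂ * dist y x ^ 2 / t)) * 1 ∂μ :=
          lintegral_const_mul' _ _ ENNReal.ofReal_ne_top
      _ ≤ ENNReal.ofReal (C₁ * t ^ (-(m / 2))) * ENNReal.ofReal (Km * (C_V * t ^ (m / 2))) :=
          mul_le_mul_right hone _
      _ = ENNReal.ofReal (C₁ * t ^ (-(m / 2)) * (Km * (C_V * t ^ (m / 2)))) :=
          (ENNReal.ofReal_mul (mul_pos hC₁ (htp _)).le).symm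
      _ ≤ ENNReal.ofReal (C₁ * Km * C_V) := by
          refine ENNReal.ofReal_le_ofReal (le_of_eq ?_)
          have ha : t ^ (-(m / 2)) * t ^ (m / 2) = 1 := by
            rw [← Real.rpow_add ht]; norm_num
          calc C₁ * t ^ (-(m / 2)) * (Km * (C_V * t ^ (m / 2)))
              = C₁ * Km * C_V * (t ^ (-(m / 2)) * t ^ (m / 2)) := by ring
            _ = C₁ * Km * C_V := by rw [ha, mul_one]
  have hnear : ∫⁻ x in B₁, (∫⁻ y in B₂, ENNReal.ofReal (G t x y) * h y ∂μ) ∂μ ≤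
      ENNReal.ofReal (C₁ * Km * C_V * (N ^ p * (2 * R) ^ lam)) := by
    have hum : AEMeasurable (Function.uncurry fun x y => ENNReal.ofReal (G t x y) * h y)
        ((μ.restrict B₁).prod (μ.restrict B₂)) :=
      (hGmxy.mul (hhmeas.comp measurable_snd)).aemeasurable
    rw [lintegral_lintegral_swap hum]
    calc ∫⁻ y in B₂, (∫⁻ x in B₁, ENNReal.ofReal (G t x y) * h y ∂μ) ∂μ
        = ∫⁻ y in B₂, (∫⁻ x in B₁, ENNReal.ofReal (G t x y) ∂μ) * h y ∂μ := by
          refine lintegral_congr fun y => ?_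
          exact lintegral_mul_const' (h y) _ ENNReal.ofReal_ne_top
      _ ≤ ∫⁻ y in B₂, ENNReal.ofReal (C₁ * Km * C_V) * h y ∂μ :=
          lintegral_mono fun y => mul_le_mul_left (hxint y) _
      _ = ENNReal.ofReal (C₁ * Km * C_V) * ∫⁻ y in B₂, h y ∂μ :=
          lintegral_const_mul' _ _ ENNReal.ofReal_ne_top
      _ ≤ ENNReal.ofReal (C₁ * Km * C_V) * ENNReal.ofReal (N ^ p * (2 * R) ^ lam) :=
          mul_le_mul_right (hmor x₀ (2 * R) (by linarith)) _
      _ = _ := (ENNReal.ofReal_mul (by positivity)).symm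
  -- far part
  have hfarpt : ∀ x ∈ B₁, ∫⁻ y in B₂ᶜ, ENNReal.ofReal (G t x y) * h y ∂μ ≤
      ENNReal.ofReal (C₁ * t ^ (-(m / 2)) * Real.exp (-(C₂ / 2 * (R ^ 2 / t))) *
        (K2 * (N ^ p * t ^ (lam / 2)))) := by
    intro x hx
    have hxd : dist x x₀ < R := Metric.mem_ball.mp hx
    have hcont : Measurable fun y : X => ENNReal.ofReal (Real.exp (-(C₂ / 2) * dist x y ^ 2 / t)) := by
      have harg : Continuous fun y : X => -(C₂ / 2) * dist x y ^ 2 / t :=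
        (continuous_const.mul ((continuous_const.dist continuous_id).pow 2)).div_const t
      exact (Real.continuous_exp.comp harg).measurable.ennreal_ofReal
    have hgm2 := gauss_morrey μ lam (C₂ / 2) (N ^ p) hlam0 (by linarith)
      (Real.rpow_nonneg hN p) h hhmeas hmor t ht x
    calc ∫⁻ y in B₂ᶜ, ENNReal.ofReal (G t x y) * h y ∂μ
        ≤ ∫⁻ y in B₂ᶜ, ENNReal.ofReal (C₁ * t ^ (-(m / 2)) * Real.exp (-(C₂ / 2 * (R ^ 2 / t)))) *
            (ENNReal.ofReal (Real.exp (-(C₂ / 2) * dist x y ^ 2 / t)) * h y) ∂μ := by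
          refine setLIntegral_mono (measurable_const.mul (hcont.mul hhmeas)) fun y hy => ?_
          rw [← mul_assoc, ← ENNReal.ofReal_mul
            (mul_pos (mul_pos hC₁ (htp _)) (Real.exp_pos _)).le]
          refine mul_le_mul_left (ENNReal.ofReal_le_ofReal ?_) _
          have hyd : 2 * R ≤ dist y x₀ := by
            by_contra hcon
            push_neg at hcon
            exact hy (Metric.mem_ball.mpr hcon)
          have hdxy : R ≤ dist x y := by
            have h3 : dist y x₀ ≤ dist x y + dist x x₀ := by
              rw [dist_comm x y]
              exact dist_triangle y x x₀
            linarith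
          calc G t x y ≤ C₁ * t ^ (-(m / 2)) * Real.exp (-C₂ * dist x y ^ 2 / t) := hGbd t ht x y
            _ ≤ C₁ * t ^ (-(m / 2)) *
                (Real.exp (-(C₂ / 2 * (R ^ 2 / t))) * Real.exp (-(C₂ / 2) * dist x y ^ 2 / t)) := by
                refine mul_le_mul_of_nonneg_left ?_ (mul_pos hC₁ (htp _)).le
                rw [← Real.exp_add]
                refine Real.exp_le_exp.mpr ?_
                have hd2 : R ^ 2 ≤ dist x y ^ 2 := pow_le_pow_left₀ hR.le hdxy 2
                have h4 : R ^ 2 / t ≤ dist x y ^ 2 / t := by gcongr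
                have h5 : C₂ / 2 * (R ^ 2 / t) ≤ C₂ / 2 * (dist x y ^ 2 / t) :=
                  mul_le_mul_of_nonneg_left h4 (by linarith)
                have e : -C₂ * dist x y ^ 2 / t =
                    -(C₂ / 2 * (dist x y ^ 2 / t)) + -(C₂ / 2) * dist x y ^ 2 / t := by ring
                rw [e]
                linarith
            _ = C₁ * t ^ (-(m / 2)) * Real.exp (-(C₂ / 2 * (R ^ 2 / t))) *
                Real.exp (-(C₂ / 2) * dist x y ^ 2 / t) := by ring
      _ ≤ ∫⁻ y, ENNReal.ofReal (C₁ * t ^ (-(m / 2)) * Real.exp (-(C₂ / 2 * (R ^ 2 / t)))) *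
            (ENNReal.ofReal (Real.exp (-(C₂ / 2) * dist x y ^ 2 / t)) * h y) ∂μ :=
          setLIntegral_le_lintegral _ _
      _ = ENNReal.ofReal (C₁ * t ^ (-(m / 2)) * Real.exp (-(C₂ / 2 * (R ^ 2 / t)))) *
            ∫⁻ y, ENNReal.ofReal (Real.exp (-(C₂ / 2) * dist x y ^ 2 / t)) * h y ∂μ :=
          lintegral_const_mul' _ _ ENNReal.ofReal_ne_top
      _ ≤ ENNReal.ofReal (C₁ * t ^ (-(m / 2)) * Real.exp (-(C₂ / 2 * (R ^ 2 / t)))) *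
            ENNReal.ofReal (K2 * (N ^ p * t ^ (lam / 2))) := mul_le_mul_right hgm2 _
      _ = _ := (ENNReal.ofReal_mul
          (mul_pos (mul_pos hC₁ (htp _)) (Real.exp_pos _)).le).symm
  have hfar : ∫⁻ x in B₁, (∫⁻ y in B₂ᶜ, ENNReal.ofReal (G t x y) * h y ∂μ) ∂μ ≤
      ENNReal.ofReal (C_V * (C₁ * K2 * M) * (N ^ p * R ^ lam)) := by
    calc ∫⁻ x in B₁, (∫⁻ y in B₂ᶜ, ENNReal.ofReal (G t x y) * h y ∂μ) ∂μ
        ≤ ∫⁻ _ in B₁, ENNReal.ofReal (C₁ * t ^ (-(m / 2)) *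
            Real.exp (-(C₂ / 2 * (R ^ 2 / t))) * (K2 * (N ^ p * t ^ (lam / 2)))) ∂μ :=
          setLIntegral_mono measurable_const hfarpt
      _ = ENNReal.ofReal (C₁ * t ^ (-(m / 2)) * Real.exp (-(C₂ / 2 * (R ^ 2 / t))) *
            (K2 * (N ^ p * t ^ (lam / 2)))) * μ B₁ := setLIntegral_const _ _
      _ ≤ ENNReal.ofReal (C₁ * t ^ (-(m / 2)) * Real.exp (-(C₂ / 2 * (R ^ 2 / t))) *
            (K2 * (N ^ p * t ^ (lam / 2)))) * ENNReal.ofReal (C_V * R ^ m) :=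
          mul_le_mul_right (hvol x₀ R hR) _
      _ = ENNReal.ofReal (C₁ * t ^ (-(m / 2)) * Real.exp (-(C₂ / 2 * (R ^ 2 / t))) *
            (K2 * (N ^ p * t ^ (lam / 2))) * (C_V * R ^ m)) :=
          (ENNReal.ofReal_mul (mul_nonneg (mul_nonneg (mul_pos hC₁ (htp _)).le
            (Real.exp_pos _).le) (mul_nonneg hK20 (mul_nonneg (Real.rpow_nonneg hN p)
            (htp _).le)))).symm
      _ ≤ ENNReal.ofReal (C_V * (C₁ * K2 * M) * (N ^ p * R ^ lam)) := by
          refine ENNReal.ofReal_le_ofReal ?_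
          have hfr := far_real_aux hR ht hlam0 hMs
          calc C₁ * t ^ (-(m / 2)) * Real.exp (-(C₂ / 2 * (R ^ 2 / t))) *
                (K2 * (N ^ p * t ^ (lam / 2))) * (C_V * R ^ m)
              = C₁ * K2 * N ^ p * C_V *
                (t ^ (-(m / 2)) * t ^ (lam / 2) * R ^ m * Real.exp (-(C₂ / 2 * (R ^ 2 / t)))) := by
                ring
            _ ≤ C₁ * K2 * N ^ p * C_V * (M * R ^ lam) :=
                mul_le_mul_of_nonneg_left hfr (by positivity)
            _ = C_V * (C₁ * K2 * M) * (N ^ p * R ^ lam) := by ring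
  -- Morrey bound at exponent p
  have hMorp : ∫⁻ x in B₁, (∫⁻ y, ENNReal.ofReal (G t x y) * h y ∂μ) ∂μ ≤
      ENNReal.ofReal (CB * (N ^ p * R ^ lam)) := by
    have hmeasnear : Measurable fun x => ∫⁻ y in B₂, ENNReal.ofReal (G t x y) * h y ∂μ :=
      Measurable.lintegral_prod_right' (hGmxy.mul (hhmeas.comp measurable_snd))
    calc ∫⁻ x in B₁, (∫⁻ y, ENNReal.ofReal (G t x y) * h y ∂μ) ∂μ
        = ∫⁻ x in B₁, ((∫⁻ y in B₂, ENNReal.ofReal (G t x y) * h y ∂μ) +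
            ∫⁻ y in B₂ᶜ, ENNReal.ofReal (G t x y) * h y ∂μ) ∂μ :=
          lintegral_congr fun x => (lintegral_add_compl _ measurableSet_ball).symm
      _ = (∫⁻ x in B₁, (∫⁻ y in B₂, ENNReal.ofReal (G t x y) * h y ∂μ) ∂μ) +
            ∫⁻ x in B₁, (∫⁻ y in B₂ᶜ, ENNReal.ofReal (G t x y) * h y ∂μ) ∂μ :=
          lintegral_add_left hmeasnear _
      _ ≤ ENNReal.ofReal (C₁ * Km * C_V * (N ^ p * (2 * R) ^ lam)) +
            ENNReal.ofReal (C_V * (C₁ * K2 * M) * (N ^ p * R ^ lam)) := add_le_add hnear hfar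
      _ = ENNReal.ofReal (C₁ * Km * C_V * (N ^ p * (2 * R) ^ lam) +
            C_V * (C₁ * K2 * M) * (N ^ p * R ^ lam)) :=
          (ENNReal.ofReal_add (by positivity) (by positivity)).symm
      _ ≤ ENNReal.ofReal (CB * (N ^ p * R ^ lam)) := by
          refine ENNReal.ofReal_le_ofReal ?_
          have h2R : (2 * R) ^ lam = 2 ^ lam * R ^ lam := Real.mul_rpow (by norm_num) hR.le
          calc C₁ * Km * C_V * (N ^ p * (2 * R) ^ lam) +
                C_V * (C₁ * K2 * M) * (N ^ p * R ^ lam)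
              = (C₁ * Km * C_V * 2 ^ lam + C_V * (C₁ * K2 * M)) * (N ^ p * R ^ lam) := by
                rw [h2R]; ring
            _ ≤ CB * (N ^ p * R ^ lam) :=
                mul_le_mul_of_nonneg_right (le_max_left _ _) (by positivity)
  -- final assembly
  have hs0 : 0 ≤ (q - p) / p := div_nonneg (by linarith) hp0.le
  have hE0 : 0 ≤ CA * N ^ p * t ^ ((lam - m) / 2) :=
    mul_nonneg (mul_nonneg hCA0.le (Real.rpow_nonneg hN p)) (htp _).le
  have hpoint : ∀ x : X, (∫⁻ y, ENNReal.ofReal (G t x y * |u₀ y|) ∂μ) ^ q ≤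
      (ENNReal.ofReal (CA * N ^ p * t ^ ((lam - m) / 2))) ^ ((q - p) / p) *
        ((∫⁻ y, ENNReal.ofReal (G t x y * |u₀ y|) ∂μ) ^ p) := by
    intro x
    have hFp : (∫⁻ y, ENNReal.ofReal (G t x y * |u₀ y|) ∂μ) ^ p ≤
        ENNReal.ofReal (CA * N ^ p * t ^ ((lam - m) / 2)) := le_trans (hJen x) (hPle x)
    have hqsplit : (q - p) + p = q := by ring
    have hsplit : (∫⁻ y, ENNReal.ofReal (G t x y * |u₀ y|) ∂μ) ^ q =
        (∫⁻ y, ENNReal.ofReal (G t x y * |u₀ y|) ∂μ) ^ (q - p) *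
          (∫⁻ y, ENNReal.ofReal (G t x y * |u₀ y|) ∂μ) ^ p := by
      conv_lhs => rw [← hqsplit]
      rw [ENNReal.rpow_add_of_nonneg _ _ (by linarith) hp0.le]
    rw [hsplit]
    refine mul_le_mul' ?_ le_rfl
    have hexp : (∫⁻ y, ENNReal.ofReal (G t x y * |u₀ y|) ∂μ) ^ (q - p) =
        ((∫⁻ y, ENNReal.ofReal (G t x y * |u₀ y|) ∂μ) ^ p) ^ ((q - p) / p) := by
      rw [← ENNReal.rpow_mul]
      congr 1
      field_simp
    rw [hexp]
    exact ENNReal.rpow_le_rpow hFp hs0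
  calc ∫⁻ x in B₁, (∫⁻ y, ENNReal.ofReal (G t x y * |u₀ y|) ∂μ) ^ q ∂μ
      ≤ ∫⁻ x in B₁, (ENNReal.ofReal (CA * N ^ p * t ^ ((lam - m) / 2))) ^ ((q - p) / p) *
          ((∫⁻ y, ENNReal.ofReal (G t x y * |u₀ y|) ∂μ) ^ p) ∂μ :=
        lintegral_mono fun x => hpoint x
    _ = (ENNReal.ofReal (CA * N ^ p * t ^ ((lam - m) / 2))) ^ ((q - p) / p) *
          ∫⁻ x in B₁, (∫⁻ y, ENNReal.ofReal (G t x y * |u₀ y|) ∂μ) ^ p ∂μ :=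
        lintegral_const_mul' _ _ (ENNReal.rpow_ne_top_of_nonneg hs0 ENNReal.ofReal_ne_top)
    _ ≤ (ENNReal.ofReal (CA * N ^ p * t ^ ((lam - m) / 2))) ^ ((q - p) / p) *
          ENNReal.ofReal (CB * (N ^ p * R ^ lam)) := by
        refine mul_le_mul_right ?_ _
        exact le_trans (lintegral_mono fun x => hJen x) hMorp
    _ = ENNReal.ofReal ((CA * N ^ p * t ^ ((lam - m) / 2)) ^ ((q - p) / p)) *
          ENNReal.ofReal (CB * (N ^ p * R ^ lam)) := by
        rw [ENNReal.ofReal_rpow_of_nonneg hE0 hs0]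
    _ = ENNReal.ofReal ((CA * N ^ p * t ^ ((lam - m) / 2)) ^ ((q - p) / p) *
          (CB * (N ^ p * R ^ lam))) := (ENNReal.ofReal_mul (Real.rpow_nonneg hE0 _)).symm
    _ ≤ ENNReal.ofReal ((CA ^ (1 / p) * CB * t ^ (-((m - lam) / 2) * (1 / p - 1 / q)) * N) ^ q *
          R ^ lam) := by
        refine ENNReal.ofReal_le_ofReal ?_
        have hfin := final_real CA CB N p q lam m t hCA1 hCB1 hN hp hpq ht
        calc (CA * N ^ p * t ^ ((lam - m) / 2)) ^ ((q - p) / p) * (CB * (N ^ p * R ^ lam))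
            = ((CA * N ^ p * t ^ ((lam - m) / 2)) ^ ((q - p) / p) * (CB * N ^ p)) * R ^ lam := by
              ring
          _ ≤ (CA ^ (1 / p) * CB * t ^ (-((m - lam) / 2) * (1 / p - 1 / q)) * N) ^ q * R ^ lam :=
              mul_le_mul_of_nonneg_right hfin (Real.rpow_nonneg hR.le _)
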